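/- arXiv:1803.01055 — 2 statements merged into one kernel-verified Lean document; each statement's English description precedes it below -/
import Mathlib

section
/- Let G be a simple graph on n ≥ 2 vertices with vertex set V. Then there exists a 2-11-representant w of G such that (a) w is a concatenation of at most n² − n + 2 permutations of V, and (b) for every vertex i ∈ V, at least one of the permutations in this concatenation has i as its first letter. In particular, every simple graph is permutationally 2-11-representable. -/
/-- Number of occurrences of the consecutive pattern 11 in a word,
i.e. the number of positions `i` with `u i = u (i+1)`. -/
def pattern11Count {V : Type*} [DecidableEq V] (u : List V) : ℕ :=
  (u.zip u.tail).countP (fun p => decide (p.1 = p.2))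

/-- `w` is a `k`-11-representant of the simple graph `G`: every vertex occurs in `w`,
and two distinct vertices are adjacent iff the subword of `w` induced by them contains
at most `k` occurrences of the consecutive pattern 11. -/
def IsK11Rep {V : Type*} [DecidableEq V] (G : SimpleGraph V) (k : ℕ) (w : List V) : Prop :=
  (∀ v : V, v ∈ w) ∧
  ∀ x y : V, x ≠ y →
    (G.Adj x y ↔ pattern11Count (w.filter (fun a => decide (a = x ∨ a = y))) ≤ k)

/-- A simple graph is `k`-11-representable if it has a `k`-11-representant. -/
def K11Representable {V : Type*} [DecidableEq V] (G : SimpleGraph V) (k : ℕ) : Prop :=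
  ∃ w : List V, IsK11Rep G k w

/-- A graph is `t`-uniformly `k`-11-representable if it has a `k`-11-representant in which
every vertex occurs exactly `t` times. -/
def UniformK11Rep {V : Type*} [DecidableEq V] (G : SimpleGraph V) (t k : ℕ) : Prop :=
  ∃ w : List V, IsK11Rep G k w ∧ ∀ v : V, w.count v = t

/-- The final permutation `σ(w)`: distinct letters of `w` in order of last occurrence. -/
def finalPerm {V : Type*} [DecidableEq V] (w : List V) : List V := w.dedup

/-- The initial permutation `π(w)`: distinct letters of `w` in order of first occurrence. -/
def initPerm {V : Type*} [DecidableEq V] (w : List V) : List V := (w.reverse.dedup).reverse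

namespace K11


/-- number of sign changes in a boolean list -/
def chg : List Bool → ℕ
  | [] => 0
  | [_] => 0
  | a :: b :: t => (if a = b then 0 else 1) + chg (b :: t)

lemma chg_nil : chg [] = 0 := rfl
lemma chg_single (a : Bool) : chg [a] = 0 := rfl
lemma chg_cons_cons (a b : Bool) (t : List Bool) :
    chg (a :: b :: t) = (if a = b then 0 else 1) + chg (b :: t) := rfl

lemma chg_cons (a : Bool) (l : List Bool) :
    chg (a :: l) = (match l.head? with | some b => if a = b then 0 else 1 | none => 0) + chg l := by
  cases l with
  | nil => rfl
  | cons b t => rfl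

lemma chg_cons_same (a : Bool) (l : List Bool) (h : l.head? = some a) :
    chg (a :: l) = chg l := by
  rw [chg_cons, h]; simp

lemma chg_replicate (k : ℕ) (c : Bool) : chg (List.replicate k c) = 0 := by
  induction k with
  | zero => rfl
  | succ m ih =>
    cases m with
    | zero => rfl
    | succ m' => rw [List.replicate_succ, chg_cons_same]; · exact ih
                 · simp [List.replicate_succ]

lemma chg_replicate_append (k : ℕ) (c : Bool) (l : List Bool) (hk : 1 ≤ k) :
    chg (List.replicate k c ++ l) = chg (c :: l) := by
  induction k with
  | zero => omega
  | succ m ih =>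
    cases m with
    | zero => simp
    | succ m' =>
      rw [List.replicate_succ, List.cons_append, chg_cons_same, ih (by omega)]
      simp [List.replicate_succ]

lemma chg_append_cons (l₁ : List Bool) (c : Bool) (l₂ : List Bool) :
    chg (l₁ ++ c :: l₂) = chg (l₁ ++ [c]) + chg (c :: l₂) := by
  induction l₁ with
  | nil => simp [chg_single]
  | cons x t ih =>
    rw [List.cons_append, List.cons_append, chg_cons, chg_cons, ih]
    have : (t ++ c :: l₂).head? = (t ++ [c]).head? := by
      cases t <;> simp
    rw [this]; ring

lemma chg_cons_all_eq (c c' : Bool) (l : List Bool) (hne : c ≠ c') (hl : l ≠ [])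
    (hall : ∀ x ∈ l, x = c') : chg (c :: l) = 1 := by
  have : l = List.replicate l.length c' := List.eq_replicate_of_mem hall
  rw [this]
  cases hl' : l.length with
  | zero => simp [List.length_eq_zero_iff] at hl' ; exact absurd hl' hl
  | succ m =>
    rw [List.replicate_succ, chg_cons_cons, if_neg hne]
    have := chg_replicate (m+1) c'
    rw [List.replicate_succ] at this
    rw [this]

/-- pattern11Count of a cons -/
lemma p11_cons {V : Type*} [DecidableEq V] (a : V) (l : List V) :
    pattern11Count (a :: l) =
      (match l.head? with | some b => if a = b then 1 else 0 | none => 0) + pattern11Count l := by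
  cases l with
  | nil => rfl
  | cons b t =>
    show ((a :: b :: t).zip (b :: t)).countP _ = _
    rw [List.zip_cons_cons, List.countP_cons]
    simp only [pattern11Count]
    have : (b :: t).tail = t := rfl
    rw [this]
    by_cases h : a = b <;> simp [h] <;> ring


/-- the walk stop generator: `q` is the current 1-based position, the option
records the start of a pending run of `false` flags. -/
def go : ℕ → Option ℕ → List Bool → List ℕ
  | _, none, [] => []
  | q, some s, [] => [q - 1, s - 1]
  | q, none, true :: fs => go (q+1) none fs
  | q, none, false :: fs => go (q+1) (some q) fs
  | q, some s, true :: fs => (q-1) :: (s-1) :: go (q+1) none fs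
  | q, some s, false :: fs => go (q+1) (some s) fs

def stc : Option ℕ → ℕ
  | none => 1
  | some _ => 2

def stlo : Option ℕ → ℕ → ℕ
  | none, q => q
  | some s, _ => s

lemma go_length : ∀ (fs : List Bool) (q : ℕ) (st : Option ℕ),
    (go q st fs).length ≤ fs.length + stc st
  | [], _, none => by simp [go, stc]
  | [], _, some s => by simp [go, stc]
  | true :: fs, q, none => by
      have := go_length fs (q+1) none
      simp [go, stc] at *; omega
  | false :: fs, q, none => by
      have := go_length fs (q+1) (some q)
      simp [go, stc] at *; omega
  | true :: fs, q, some s => by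
      have := go_length fs (q+1) none
      simp [go, stc] at *; omega
  | false :: fs, q, some s => by
      have := go_length fs (q+1) (some s)
      simp [go, stc] at *; omega

lemma go_mem_le : ∀ (fs : List Bool) (q : ℕ) (st : Option ℕ), 1 ≤ q →
    (∀ s, st = some s → s ≤ q) → ∀ p ∈ go q st fs, p < q + fs.length
  | [], q, none => by simp [go]
  | [], q, some s => by
      intro hq h p hp
      simp [go] at hp
      have := h s rfl
      simp only [List.length_nil]
      rcases hp with hp | hp <;> omega
  | true :: fs, q, none => by
      intro hq _ p hp
      have := go_mem_le fs (q+1) none (by omega) (by simp) p (by simpa [go] using hp)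
      simp; omega
  | false :: fs, q, none => by
      intro hq _ p hp
      have := go_mem_le fs (q+1) (some q) (by omega) (by intro s hs; cases hs; omega) p (by simpa [go] using hp)
      simp; omega
  | true :: fs, q, some s => by
      intro hq h p hp
      have hs := h s rfl
      simp [go] at hp
      rcases hp with h1 | h1 | h1
      · simp; omega
      · simp; omega
      · have := go_mem_le fs (q+1) none (by omega) (by simp) p h1
        simp; omega
  | false :: fs, q, some s => by
      intro hq h p hp
      have hs := h s rfl
      have := go_mem_le fs (q+1) (some s) (by omega) (by intro s' hs'; cases hs'; omega) p (by simpa [go] using hp)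
      simp; omega

lemma go_mem_ge : ∀ (fs : List Bool) (q : ℕ) (st : Option ℕ),
    (∀ s, st = some s → s ≤ q) → ∀ p ∈ go q st fs, stlo st q - 1 ≤ p
  | [], q, none => by simp [go]
  | [], q, some s => by
      intro h p hp
      simp [go] at hp
      have := h s rfl
      simp only [stlo]
      rcases hp with h1 | h1 <;> omega
  | true :: fs, q, none => by
      intro _ p hp
      have := go_mem_ge fs (q+1) none (by simp) p (by simpa [go] using hp)
      simp [stlo] at *; omega
  | false :: fs, q, none => by
      intro _ p hp
      have := go_mem_ge fs (q+1) (some q) (by intro s hs; cases hs; omega) p (by simpa [go] using hp)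
      simp [stlo] at *; omega
  | true :: fs, q, some s => by
      intro h p hp
      have hs := h s rfl
      simp [go] at hp
      rcases hp with h1 | h1 | h1
      · simp [stlo]; omega
      · simp [stlo]; omega
      · have := go_mem_ge fs (q+1) none (by simp) p h1
        simp [stlo] at *; omega
  | false :: fs, q, some s => by
      intro h p hp
      have hs := h s rfl
      have := go_mem_ge fs (q+1) (some s) (by intro s' hs'; cases hs'; omega) p (by simpa [go] using hp)
      simp [stlo] at *; omega

lemma map_dec_all_false (q : ℕ) (l : List ℕ) (h : ∀ p ∈ l, ¬ p < q) :
    ∀ x ∈ l.map (fun p => decide (p < q)), x = false := by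
  intro x hx
  rcases List.mem_map.1 hx with ⟨p, hp, rfl⟩
  simpa using h p hp

lemma go_cross : ∀ (fs : List Bool) (q0 : ℕ) (st : Option ℕ) (prev E q : ℕ),
    1 ≤ q0 →
    (st = none → prev < q0 ∧ q0 ≤ q) →
    (∀ s, st = some s → prev < s ∧ 1 ≤ s ∧ s ≤ q ∧ s < q0) →
    q < q0 + fs.length →
    q ≤ E →
    chg (List.map (fun p => decide (p < q)) (prev :: (go q0 st fs ++ [E]))) =
      if q < q0 then 3 else if fs.getD (q - q0) true then 1 else 3
  | [], q0, none => by
    intro prev E q h1 h0 hs hcond hE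
    exfalso
    simp only [List.length_nil] at hcond
    have := h0 rfl
    omega
  | [], q0, some s => by
    intro prev E q h1 h0 hs hcond hE
    obtain ⟨hps, hs1, hsq, hsq0⟩ := hs s rfl
    simp only [List.length_nil] at hcond
    rw [if_pos (show q < q0 by omega)]
    have e1 : decide (prev < q) = true := decide_eq_true (by omega)
    have e2 : decide (q0 - 1 < q) = false := decide_eq_false (by omega)
    have e3 : decide (s - 1 < q) = true := decide_eq_true (by omega)
    have e4 : decide (E < q) = false := decide_eq_false (by omega)
    simp [go, e1, e2, e3, e4, chg]
  | true :: fs, q0, none => by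
    intro prev E q h1 h0 hs hcond hE
    obtain ⟨hp0, hq0⟩ := h0 rfl
    simp only [List.length_cons] at hcond
    have hgo : go q0 none (true :: fs) = go (q0+1) none fs := by simp [go]
    rcases Nat.eq_or_lt_of_le hq0 with heq | hlt
    · -- q = q0
      rw [if_neg (show ¬ q < q0 by omega)]
      rw [show q - q0 = 0 by omega, List.getD_cons_zero, if_pos rfl]
      have e1 : decide (prev < q) = true := decide_eq_true (by omega)
      rw [hgo, List.map_cons, e1]
      apply chg_cons_all_eq true false _ (by simp) (by simp)
      apply map_dec_all_false
      intro p hp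
      rcases List.mem_append.1 hp with h | h
      · have := go_mem_ge fs (q0+1) none (by simp) p h
        simp [stlo] at this; omega
      · simp at h; omega
    · -- q > q0
      have ih := go_cross fs (q0+1) none prev E q (by omega) (by intro _; exact ⟨by omega, by omega⟩)
        (by simp) (by omega) hE
      rw [hgo, ih, if_neg (show ¬ q < q0 + 1 by omega), if_neg (show ¬ q < q0 by omega),
        show q - q0 = (q - (q0+1)) + 1 by omega, List.getD_cons_succ]
  | false :: fs, q0, none => by
    intro prev E q h1 h0 hs hcond hE
    obtain ⟨hp0, hq0⟩ := h0 rfl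
    simp only [List.length_cons] at hcond
    have hgo : go q0 none (false :: fs) = go (q0+1) (some q0) fs := by simp [go]
    have ih := go_cross fs (q0+1) (some q0) prev E q (by omega) (by intro h; cases h)
      (by intro s hs'; cases hs'; exact ⟨by omega, by omega, by omega, by omega⟩)
      (by omega) hE
    rw [hgo, ih, if_neg (show ¬ q < q0 by omega)]
    rcases Nat.eq_or_lt_of_le hq0 with heq | hlt
    · rw [if_pos (show q < q0 + 1 by omega),
        show q - q0 = 0 by omega, List.getD_cons_zero]
      simp
    · rw [if_neg (show ¬ q < q0 + 1 by omega),
        show q - q0 = (q - (q0+1)) + 1 by omega, List.getD_cons_succ]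
  | true :: fs, q0, some s => by
    intro prev E q h1 h0 hs hcond hE
    obtain ⟨hps, hs1, hsq, hsq0⟩ := hs s rfl
    simp only [List.length_cons] at hcond
    have hgo : go q0 (some s) (true :: fs) = (q0-1) :: (s-1) :: go (q0+1) none fs := by simp [go]
    have hallge : ∀ p ∈ go (q0+1) none fs, q0 ≤ p := by
      intro p hp
      have := go_mem_ge fs (q0+1) none (by simp) p hp
      simp [stlo] at this; omega
    rcases Nat.lt_or_ge q q0 with hlt | hge
    · -- q < q0 : consumed run, value 3
      rw [if_pos hlt]
      have e1 : decide (prev < q) = true := decide_eq_true (by omega)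
      have e2 : decide (q0 - 1 < q) = false := decide_eq_false (by omega)
      have e3 : decide (s - 1 < q) = true := decide_eq_true (by omega)
      rw [hgo]
      simp only [List.cons_append, List.map_cons, e1, e2, e3]
      rw [chg_cons (true) _, chg_cons (false) _]
      simp only [List.head?_cons]
      have hone : chg (true :: List.map (fun p => decide (p < q)) (go (q0+1) none fs ++ [E])) = 1 := by
        apply chg_cons_all_eq true false _ (by simp) (by simp)
        apply map_dec_all_false
        intro p hp
        rcases List.mem_append.1 hp with h | h
        · have := hallge p h; omega
        · simp at h; omega
      rw [hone]
      simp
    · rcases Nat.eq_or_lt_of_le hge with heq | hlt2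
      · -- q = q0, flag true, value 1
        rw [if_neg (show ¬ q < q0 by omega),
          show q - q0 = 0 by omega, List.getD_cons_zero, if_pos rfl]
        have e1 : decide (prev < q) = true := decide_eq_true (by omega)
        have e2 : decide (q0 - 1 < q) = true := decide_eq_true (by omega)
        have e3 : decide (s - 1 < q) = true := decide_eq_true (by omega)
        rw [hgo]
        simp only [List.cons_append, List.map_cons, e1, e2, e3]
        rw [chg_cons_same, chg_cons_same]
        · apply chg_cons_all_eq true false _ (by simp) (by simp)
          apply map_dec_all_false
          intro p hp
          rcases List.mem_append.1 hp with h | h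
          · have := hallge p h; omega
          · simp at h; omega
        · simp
        · simp
      · -- q > q0 : recurse with prev' = s-1
        have ih := go_cross fs (q0+1) none (s-1) E q (by omega)
          (by intro _; exact ⟨by omega, by omega⟩) (by simp)
          (by omega) hE
        have e1 : decide (prev < q) = true := decide_eq_true (by omega)
        have e2 : decide (q0 - 1 < q) = true := decide_eq_true (by omega)
        have e3 : decide (s - 1 < q) = true := decide_eq_true (by omega)
        rw [hgo]
        simp only [List.cons_append, List.map_cons, e1, e2, e3]
        rw [chg_cons_same, chg_cons_same]
        · have hml : true :: List.map (fun p => decide (p < q)) (go (q0+1) none fs ++ [E])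
              = List.map (fun p => decide (p < q)) ((s-1) :: (go (q0+1) none fs ++ [E])) := by
            simp [e3]
          rw [hml, ih, if_neg (show ¬ q < q0 + 1 by omega), if_neg (show ¬ q < q0 by omega),
            show q - q0 = (q - (q0+1)) + 1 by omega, List.getD_cons_succ]
        · simp
        · simp
  | false :: fs, q0, some s => by
    intro prev E q h1 h0 hs hcond hE
    obtain ⟨hps, hs1, hsq, hsq0⟩ := hs s rfl
    simp only [List.length_cons] at hcond
    have hgo : go q0 (some s) (false :: fs) = go (q0+1) (some s) fs := by simp [go]
    have ih := go_cross fs (q0+1) (some s) prev E q (by omega) (by intro h; cases h)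
      (by intro s' hs'; cases hs'; exact ⟨by omega, by omega, by omega, by omega⟩)
      (by omega) hE
    rw [hgo, ih]
    rcases Nat.lt_or_ge q q0 with hlt | hge
    · rw [if_pos (show q < q0 + 1 by omega), if_pos (show q < q0 by omega)]
    · rw [if_neg (show ¬ q < q0 by omega)]
      rcases Nat.eq_or_lt_of_le hge with heq | hlt2
      · rw [if_pos (show q < q0 + 1 by omega),
          show q - q0 = 0 by omega, List.getD_cons_zero]
        simp
      · rw [if_neg (show ¬ q < q0 + 1 by omega),
          show q - q0 = (q - (q0+1)) + 1 by omega, List.getD_cons_succ]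
lemma take_range' (u k p : ℕ) : (List.range' u k).take p = List.range' u (min p k) := by
  induction k generalizing u p with
  | zero => simp
  | succ m ih =>
    cases p with
    | zero => simp
    | succ p' =>
      rw [List.range'_succ, List.take_succ_cons, ih,
        show min (p'+1) (m+1) = min p' m + 1 by omega, List.range'_succ]

lemma drop_range' (u k p : ℕ) : (List.range' u k).drop p = List.range' (u+p) (k-p) := by
  induction k generalizing u p with
  | zero => simp
  | succ m ih =>
    cases p with
    | zero => simp
    | succ p' =>
      rw [List.range'_succ, List.drop_succ_cons, ih]
      congr 1 <;> omega

/-- filter of an interval by membership in the pair {a,b}, a < b -/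
lemma filter_range' (hab : a < b) : ∀ (k u : ℕ),
    (List.range' u k).filter (fun z => decide (z = a ∨ z = b)) =
      (if u ≤ a ∧ a < u + k then [a] else []) ++ (if u ≤ b ∧ b < u + k then [b] else [])
  | 0, u => by
    rw [if_neg (show ¬ (u ≤ a ∧ a < u + 0) by omega),
      if_neg (show ¬ (u ≤ b ∧ b < u + 0) by omega)]
    rfl
  | (k+1), u => by
    rw [List.range'_succ, List.filter_cons, filter_range' hab k (u+1)]
    by_cases hua : u = a
    · subst hua
      rw [if_pos (by simp)]
      rw [if_pos (show u ≤ u ∧ u < u + (k+1) by omega)]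
      rw [if_neg (show ¬ (u+1 ≤ u ∧ u < u+1+k) by omega)]
      simp only [List.nil_append, List.singleton_append, List.cons.injEq, true_and]
      by_cases hb : u+1 ≤ b ∧ b < u+1+k
      · rw [if_pos hb, if_pos (show u ≤ b ∧ b < u + (k+1) by omega)]
      · rw [if_neg hb, if_neg (show ¬ (u ≤ b ∧ b < u + (k+1)) by omega)]
    · by_cases hub : u = b
      · subst hub
        rw [if_pos (by simp)]
        rw [if_neg (show ¬ (u ≤ a ∧ a < u + (k+1)) by omega)]
        rw [if_neg (show ¬ (u+1 ≤ a ∧ a < u+1+k) by omega)]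
        rw [if_pos (show u ≤ u ∧ u < u + (k+1) by omega)]
        rw [if_neg (show ¬ (u+1 ≤ u ∧ u < u+1+k) by omega)]
        simp
      · rw [if_neg (by simp [hua, hub])]
        by_cases h1 : u+1 ≤ a ∧ a < u+1+k
        · rw [if_pos h1, if_pos (show u ≤ a ∧ a < u + (k+1) by omega)]
          by_cases h2 : u+1 ≤ b ∧ b < u+1+k
          · rw [if_pos h2, if_pos (show u ≤ b ∧ b < u + (k+1) by omega)]
          · rw [if_neg h2, if_neg (show ¬ (u ≤ b ∧ b < u + (k+1)) by omega)]
        · rw [if_neg h1, if_neg (show ¬ (u ≤ a ∧ a < u + (k+1)) by omega)]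
          by_cases h2 : u+1 ≤ b ∧ b < u+1+k
          · rw [if_pos h2, if_pos (show u ≤ b ∧ b < u + (k+1) by omega)]
          · rw [if_neg h2, if_neg (show ¬ (u ≤ b ∧ b < u + (k+1)) by omega)]
def others (n i : ℕ) : List ℕ := List.range' (i+1) (n-1-i) ++ List.range' 0 i

def permN (n i p : ℕ) : List ℕ := (others n i).take p ++ i :: (others n i).drop p

/-- the orientation of the pair a < b in the permutation `permN n i p`. -/
def orient (a b i p : ℕ) : Bool :=
  if i = a then decide (p < b - a) else decide (i ≤ a ∨ b < i)

lemma filter_permN {n i p : ℕ} (hab : a < b) (hbn : b < n) (hin : i < n) (hp : p ≤ n - 1 - i) :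
    (permN n i p).filter (fun z => decide (z = a ∨ z = b)) =
      if orient a b i p then [a, b] else [b, a] := by
  have hlen : (List.range' (i+1) (n-1-i)).length = n - 1 - i := List.length_range'
  have htake : (others n i).take p = List.range' (i+1) p := by
    rw [others, List.take_append, hlen, take_range',
      show p - (n-1-i) = 0 by omega, show min p (n-1-i) = p by omega, List.take_zero,
      List.append_nil]
  have hdrop : (others n i).drop p = List.range' (i+1+p) (n-1-i-p) ++ List.range' 0 i := by
    rw [others, List.drop_append, hlen, drop_range',
      show p - (n-1-i) = 0 by omega, List.drop_zero]
  rw [permN, htake, hdrop, List.filter_append, List.filter_cons, List.filter_append,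
    filter_range' hab, filter_range' hab, filter_range' hab, orient]
  by_cases hia : i = a
  · rw [if_pos (show (fun z => decide (z = a ∨ z = b)) i = true by simp [hia])]
    rw [if_pos hia]
    rw [if_neg (show ¬ (i+1 ≤ a ∧ a < i+1+p) by omega)]
    rw [if_neg (show ¬ (i+1+p ≤ a ∧ a < i+1+p+(n-1-i-p)) by omega)]
    rw [if_neg (show ¬ (0 ≤ a ∧ a < 0 + i) by omega)]
    rw [if_neg (show ¬ (0 ≤ b ∧ b < 0 + i) by omega)]
    by_cases hpb : p < b - a
    · rw [if_pos (decide_eq_true hpb)]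
      rw [if_neg (show ¬ (i+1 ≤ b ∧ b < i+1+p) by omega)]
      rw [if_pos (show i+1+p ≤ b ∧ b < i+1+p+(n-1-i-p) by omega)]
      simp [hia]
    · rw [if_neg (show ¬ (decide (p < b - a) = true) by simpa using hpb)]
      rw [if_pos (show i+1 ≤ b ∧ b < i+1+p by omega)]
      rw [if_neg (show ¬ (i+1+p ≤ b ∧ b < i+1+p+(n-1-i-p)) by omega)]
      simp [hia]
  · rw [if_neg hia]
    by_cases hib : i = b
    · rw [if_pos (show (fun z => decide (z = a ∨ z = b)) i = true by simp [hib])]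
      rw [if_neg (show ¬ (decide (i ≤ a ∨ b < i) = true) by
        simp only [decide_eq_true_eq]; omega)]
      rw [if_neg (show ¬ (i+1 ≤ a ∧ a < i+1+p) by omega)]
      rw [if_neg (show ¬ (i+1 ≤ b ∧ b < i+1+p) by omega)]
      rw [if_neg (show ¬ (i+1+p ≤ a ∧ a < i+1+p+(n-1-i-p)) by omega)]
      rw [if_neg (show ¬ (i+1+p ≤ b ∧ b < i+1+p+(n-1-i-p)) by omega)]
      rw [if_pos (show 0 ≤ a ∧ a < 0 + i by omega)]
      rw [if_neg (show ¬ (0 ≤ b ∧ b < 0 + i) by omega)]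
      simp [hib]
    · rw [if_neg (show ¬ ((fun z => decide (z = a ∨ z = b)) i = true) by
        simp only [decide_eq_true_eq]; push_neg; exact ⟨hia, hib⟩)]
      rcases Nat.lt_or_ge i a with hilta | hgea
      · rw [if_pos (show (decide (i ≤ a ∨ b < i) = true) from decide_eq_true (by omega))]
        rw [if_neg (show ¬ (0 ≤ a ∧ a < 0 + i) by omega)]
        rw [if_neg (show ¬ (0 ≤ b ∧ b < 0 + i) by omega)]
        by_cases h1 : a < i+1+p
        · rw [if_pos (show i+1 ≤ a ∧ a < i+1+p by omega)]
          rw [if_neg (show ¬ (i+1+p ≤ a ∧ a < i+1+p+(n-1-i-p)) by omega)]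
          by_cases h2 : b < i+1+p
          · rw [if_pos (show i+1 ≤ b ∧ b < i+1+p by omega)]
            rw [if_neg (show ¬ (i+1+p ≤ b ∧ b < i+1+p+(n-1-i-p)) by omega)]
            simp
          · rw [if_neg (show ¬ (i+1 ≤ b ∧ b < i+1+p) by omega)]
            rw [if_pos (show i+1+p ≤ b ∧ b < i+1+p+(n-1-i-p) by omega)]
            simp
        · rw [if_neg (show ¬ (i+1 ≤ a ∧ a < i+1+p) by omega)]
          rw [if_pos (show i+1+p ≤ a ∧ a < i+1+p+(n-1-i-p) by omega)]
          rw [if_neg (show ¬ (i+1 ≤ b ∧ b < i+1+p) by omega)]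
          rw [if_pos (show i+1+p ≤ b ∧ b < i+1+p+(n-1-i-p) by omega)]
          simp
      · rcases Nat.lt_or_ge i b with hiltb | hgeb
        · rw [if_neg (show ¬ (decide (i ≤ a ∨ b < i) = true) by
            simp only [decide_eq_true_eq]; omega)]
          rw [if_neg (show ¬ (i+1 ≤ a ∧ a < i+1+p) by omega)]
          rw [if_neg (show ¬ (i+1+p ≤ a ∧ a < i+1+p+(n-1-i-p)) by omega)]
          rw [if_pos (show 0 ≤ a ∧ a < 0 + i by omega)]
          rw [if_neg (show ¬ (0 ≤ b ∧ b < 0 + i) by omega)]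
          by_cases h2 : b < i+1+p
          · rw [if_pos (show i+1 ≤ b ∧ b < i+1+p by omega)]
            rw [if_neg (show ¬ (i+1+p ≤ b ∧ b < i+1+p+(n-1-i-p)) by omega)]
            simp
          · rw [if_neg (show ¬ (i+1 ≤ b ∧ b < i+1+p) by omega)]
            rw [if_pos (show i+1+p ≤ b ∧ b < i+1+p+(n-1-i-p) by omega)]
            simp
        · rw [if_pos (show (decide (i ≤ a ∨ b < i) = true) from decide_eq_true (by omega))]
          rw [if_neg (show ¬ (i+1 ≤ a ∧ a < i+1+p) by omega)]
          rw [if_neg (show ¬ (i+1 ≤ b ∧ b < i+1+p) by omega)]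
          rw [if_neg (show ¬ (i+1+p ≤ a ∧ a < i+1+p+(n-1-i-p)) by omega)]
          rw [if_neg (show ¬ (i+1+p ≤ b ∧ b < i+1+p+(n-1-i-p)) by omega)]
          rw [if_pos (show 0 ≤ a ∧ a < 0 + i by omega)]
          rw [if_pos (show 0 ≤ b ∧ b < 0 + i by omega)]
          simp

lemma count_permN {n i p j : ℕ} (hin : i < n) (hj : j < n) :
    (permN n i p).count j = 1 := by
  have : (permN n i p).count j = ((others n i).take p ++ (others n i).drop p).count j
      + (if i = j then 1 else 0) := by
    rw [permN, List.count_append, List.count_append, List.count_cons]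
    simp only [beq_iff_eq]
    ring
  rw [List.take_append_drop] at this
  rw [this, others, List.count_append]
  have c1 : (List.range' (i+1) (n-1-i)).count j = if i+1 ≤ j ∧ j < n then 1 else 0 := by
    by_cases h : i+1 ≤ j ∧ j < n
    · rw [if_pos h, List.count_eq_one_of_mem List.nodup_range' (by
        rw [List.mem_range'_1]; omega)]
    · rw [if_neg h, List.count_eq_zero_of_not_mem (by
        rw [List.mem_range'_1]; omega)]
  have c2 : (List.range' 0 i).count j = if j < i then 1 else 0 := by
    by_cases h : j < i
    · rw [if_pos h, List.count_eq_one_of_mem List.nodup_range' (by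
        rw [List.mem_range'_1]; omega)]
    · rw [if_neg h, List.count_eq_zero_of_not_mem (by
        rw [List.mem_range'_1]; omega)]
  rw [c1, c2]
  by_cases h1 : i = j
  · rw [if_neg (show ¬ (i+1 ≤ j ∧ j < n) by omega), if_neg (show ¬ j < i by omega), if_pos h1]
  · rcases Nat.lt_or_ge j i with h | h
    · rw [if_neg (show ¬ (i+1 ≤ j ∧ j < n) by omega), if_pos h, if_neg h1]
    · rw [if_pos (show i+1 ≤ j ∧ j < n by omega), if_neg (show ¬ j < i by omega), if_neg h1]

lemma p11_cons' {V : Type*} [DecidableEq V] (a : V) (l : List V) :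
    pattern11Count (a :: l) =
      (if l.head? = some a then 1 else 0) + pattern11Count l := by
  cases l with
  | nil => simp [pattern11Count]
  | cons b t =>
    show ((a :: b :: t).zip (b :: t)).countP _ = _
    rw [List.zip_cons_cons, List.countP_cons]
    simp only [pattern11Count]
    have h2 : (b :: t).tail = t := rfl
    rw [h2, List.head?_cons]
    by_cases h : a = b <;> simp [h, eq_comm] <;> omega

lemma p11_pair {V : Type*} [DecidableEq V] (u v : V) (huv : u ≠ v) :
    pattern11Count [u, v] = 0 := by
  rw [p11_cons', p11_cons']
  simp [huv.symm, pattern11Count]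

def blk {α : Type*} (x y : α) (c : Bool) : List α := if c then [x, y] else [y, x]

lemma flatten_blk {α : Type*} (x y : α) (c : Bool) (t : List Bool) :
    ((List.map (blk x y) (c :: t)).flatten) =
      (if c then x else y) :: (if c then y else x) :: (List.map (blk x y) t).flatten := by
  cases c <;> simp [blk]

lemma p11_blocks {α : Type*} [DecidableEq α] {x y : α} (hxy : x ≠ y) :
    ∀ bl : List Bool, pattern11Count ((bl.map (blk x y)).flatten) = chg bl
  | [] => rfl
  | [c] => by
    rw [flatten_blk]
    simp only [List.map_nil, List.flatten_nil]
    cases c <;> simp [p11_pair, hxy, hxy.symm, chg]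
  | c :: c' :: t => by
    have ih := p11_blocks hxy (c' :: t)
    rw [flatten_blk, flatten_blk, p11_cons', p11_cons']
    rw [flatten_blk] at ih
    rw [ih]
    show _ = chg (c :: c' :: t)
    rw [chg]
    cases c <;> cases c' <;> simp [hxy, hxy.symm]

lemma p11_map {α β : Type*} [DecidableEq α] [DecidableEq β] (f : α → β) (l : List α)
    (hf : ∀ u ∈ l, ∀ v ∈ l, f u = f v → u = v) :
    pattern11Count (l.map f) = pattern11Count l := by
  induction l with
  | nil => rfl
  | cons u t ih =>
    rw [List.map_cons, p11_cons', p11_cons']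
    rw [ih (fun a ha b hb => hf a (by simp [ha]) b (by simp [hb]))]
    congr 1
    cases t with
    | nil => rfl
    | cons v t' =>
      show (if some (f v) = some (f u) then 1 else 0) = (if some v = some u then 1 else 0)
      simp only [Option.some.injEq]
      by_cases h : v = u
      · rw [if_pos (by rw [h]), if_pos h]
      · rw [if_neg (fun hh => h (hf v (by simp) u (by simp) hh)), if_neg h]
-- new defs
def flagsL (n : ℕ) (ad : ℕ → ℕ → Bool) (i : ℕ) : List Bool :=
  (List.range (n - 1 - i)).map (fun j => ad i (i + j + 1))

def stops (n : ℕ) (ad : ℕ → ℕ → Bool) (i : ℕ) : List ℕ := 0 :: go 1 none (flagsL n ad i)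

def IJ (n : ℕ) (ad : ℕ → ℕ → Bool) : List (ℕ × ℕ) :=
  (List.range n).flatMap (fun i => (stops n ad i).map (fun p => (i, p)))

lemma flagsL_length (n : ℕ) (ad : ℕ → ℕ → Bool) (i : ℕ) :
    (flagsL n ad i).length = n - 1 - i := by simp [flagsL]

lemma mem_stops_le {n : ℕ} {ad : ℕ → ℕ → Bool} {i p : ℕ} (h : p ∈ stops n ad i) :
    p ≤ n - 1 - i := by
  rcases List.mem_cons.1 h with h0 | hg
  · omega
  · have := go_mem_le (flagsL n ad i) 1 none (le_refl 1) (by simp) p hg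
    rw [flagsL_length] at this
    omega

lemma stops_length {n : ℕ} {ad : ℕ → ℕ → Bool} {i : ℕ} (hi : i < n) :
    (stops n ad i).length ≤ n - i + 1 := by
  have h := go_length (flagsL n ad i) 1 none
  rw [flagsL_length] at h
  have h2 : (stops n ad i).length = (go 1 none (flagsL n ad i)).length + 1 := by
    simp [stops]
  have h3 : stc none = 1 := rfl
  rw [h3] at h
  omega

lemma stops_last {n : ℕ} {ad : ℕ → ℕ → Bool} (hn : 1 ≤ n) :
    stops n ad (n-1) = [0] := by
  have : flagsL n ad (n-1) = [] := by
    simp [flagsL, show n - 1 - (n-1) = 0 by omega]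
  rw [stops, this]
  rfl

/-- the central counting lemma -/
lemma chg_IJ {n : ℕ} {ad : ℕ → ℕ → Bool} (hab : a < b) (hbn : b < n) :
    chg ((IJ n ad).map (fun ij => orient a b ij.1 ij.2)) =
      (if ad a b then 1 else 3) + (if b = n - 1 then 0 else 1) := by
  classical
  set F : ℕ → List Bool := fun i => (stops n ad i).map (fun p => orient a b i p) with hF
  have hmap : (IJ n ad).map (fun ij => orient a b ij.1 ij.2) = (List.range n).flatMap F := by
    rw [IJ, List.map_flatMap]
    simp only [List.map_map]
    rfl
  -- split the range
  have r1 : List.range' (a+1) (b-a) ++ List.range' (b+1) (n-1-b) = List.range' (a+1) (n-1-a) := by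
    have := List.range'_append (s := a+1) (m := b-a) (n := n-1-b) (step := 1)
    simp only [one_mul] at this
    rw [show a+1+(b-a) = b+1 by omega] at this
    rw [this, show b-a + (n-1-b) = n-1-a by omega]
  have r2 : List.range' a 1 ++ List.range' (a+1) (n-1-a) = List.range' a (n-a) := by
    have := List.range'_append (s := a) (m := 1) (n := n-1-a) (step := 1)
    simp only [one_mul] at this
    rw [show a+1*1 = a+1 by omega] at this
    rw [this, show 1 + (n-1-a) = n-a by omega]
  have r3 : List.range' 0 a ++ List.range' a (n-a) = List.range' 0 n := by
    have := List.range'_append (s := 0) (m := a) (n := n-a) (step := 1)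
    simp only [one_mul] at this
    rw [show 0+a = a by omega] at this
    rw [this, show a + (n-a) = n by omega]
  have hsplit : List.range n =
      List.range' 0 a ++ (List.range' a 1 ++ (List.range' (a+1) (b-a) ++ List.range' (b+1) (n-1-b))) := by
    rw [r1, r2, r3, List.range_eq_range']
  rw [hmap, hsplit, List.flatMap_append, List.flatMap_append, List.flatMap_append]
  have hsing : (List.range' a 1).flatMap F = F a := by
    simp [List.range'_one]
  rw [hsing]
  -- segment values
  have hB0 : ∀ x ∈ (List.range' 0 a).flatMap F, x = true := by
    intro x hx
    rcases List.mem_flatMap.1 hx with ⟨i, hi, hxi⟩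
    rw [List.mem_range'_1] at hi
    rcases List.mem_map.1 hxi with ⟨p, _, rfl⟩
    rw [orient, if_neg (by omega)]
    simp only [decide_eq_true_eq]
    omega
  have hBM : ∀ x ∈ (List.range' (a+1) (b-a)).flatMap F, x = false := by
    intro x hx
    rcases List.mem_flatMap.1 hx with ⟨i, hi, hxi⟩
    rw [List.mem_range'_1] at hi
    rcases List.mem_map.1 hxi with ⟨p, _, rfl⟩
    rw [orient, if_neg (by omega)]
    simp only [decide_eq_false_iff_not]
    omega
  have hBT : ∀ x ∈ (List.range' (b+1) (n-1-b)).flatMap F, x = true := by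
    intro x hx
    rcases List.mem_flatMap.1 hx with ⟨i, hi, hxi⟩
    rw [List.mem_range'_1] at hi
    rcases List.mem_map.1 hxi with ⟨p, _, rfl⟩
    rw [orient, if_neg (by omega)]
    simp only [decide_eq_true_eq]
    omega
  have hBM_ne : (List.range' (a+1) (b-a)).flatMap F ≠ [] := by
    apply List.ne_nil_of_mem (a := orient a b (a+1) 0)
    apply List.mem_flatMap.2
    refine ⟨a+1, by rw [List.mem_range'_1]; omega, ?_⟩
    exact List.mem_map.2 ⟨0, by simp [stops], rfl⟩
  -- head of F a is true
  have hFa : F a = decide (0 < b - a) :: (go 1 none (flagsL n ad a)).map (fun p => orient a b a p) := by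
    rw [hF]
    simp only [stops, List.map_cons]
    rw [orient, if_pos rfl]
  have horx : ∀ p, orient a b a p = decide (p < b - a) := fun p => if_pos rfl
  have stepC : chg (F a ++ [false]) = if ad a b then 1 else 3 := by
    have hfm : F a ++ [false] =
        List.map (fun p => decide (p < b - a)) (0 :: (go 1 none (flagsL n ad a) ++ [n-1])) := by
      rw [hF]
      simp only [stops, List.map_cons, List.map_append, List.map_cons, List.map_nil]
      rw [horx 0]
      rw [show List.map (fun p => orient a b a p) (go 1 none (flagsL n ad a))
          = List.map (fun p => decide (p < b - a)) (go 1 none (flagsL n ad a)) from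
        List.map_congr_left (fun p _ => horx p)]
      rw [show (false : Bool) = decide (n - 1 < b - a) from (decide_eq_false (by omega)).symm]
      rfl
    rw [hfm]
    have hc := go_cross (flagsL n ad a) 1 none 0 (n-1) (b-a) le_rfl
      (fun _ => ⟨by omega, by omega⟩) (by intro s h; cases h)
      (by rw [flagsL_length]; omega) (by omega)
    rw [hc, if_neg (show ¬ (b - a < 1) by omega)]
    have hidx : b - a - 1 < (flagsL n ad a).length := by rw [flagsL_length]; omega
    rw [List.getD_eq_getElem _ _ hidx]
    have hval : (flagsL n ad a)[b-a-1]'hidx = ad a b := by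
      simp only [flagsL, List.getElem_map, List.getElem_range]
      rw [show a + (b - a - 1) + 1 = b by omega]
    rw [hval]
  -- assembly
  set B0 := (List.range' 0 a).flatMap F with hB0def
  set BM := (List.range' (a+1) (b-a)).flatMap F with hBMdef
  set BT := (List.range' (b+1) (n-1-b)).flatMap F with hBTdef
  obtain ⟨kM, hBMeq⟩ : ∃ kM, BM = false :: List.replicate kM false := by
    have hrep := List.eq_replicate_of_mem hBM
    cases hl : BM.length with
    | zero => exact absurd (List.length_eq_zero_iff.1 hl) hBM_ne
    | succ k =>
      have hh : BM = List.replicate (k+1) false := by rw [← hl]; exact hrep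
      exact ⟨k, by rw [hh]; rfl⟩
  have hhead : (F a ++ (BM ++ BT)).head? = some true := by
    rw [hFa]
    simp only [List.cons_append, List.head?_cons]
    rw [decide_eq_true (show 0 < b - a by omega)]
  have step0 : chg (B0 ++ (F a ++ (BM ++ BT))) = chg (F a ++ (BM ++ BT)) := by
    have hrep := List.eq_replicate_of_mem hB0
    cases hl : B0.length with
    | zero => rw [List.length_eq_zero_iff.1 hl, List.nil_append]
    | succ k =>
      have hB0eq : B0 = List.replicate (k+1) true := by rw [← hl]; exact hrep
      rw [hB0eq, chg_replicate_append _ _ _ (by omega), chg_cons_same _ _ hhead]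
  rw [step0, hBMeq, List.cons_append, chg_append_cons, stepC]
  have stepD : chg (false :: (List.replicate kM false ++ BT)) = if b = n - 1 then 0 else 1 := by
    have hfc : false :: (List.replicate kM false ++ BT) = List.replicate (kM+1) false ++ BT := by
      rw [List.replicate_succ, List.cons_append]
    by_cases hb1 : b = n - 1
    · have hBT0 : BT = [] := by
        rw [hBTdef, show n-1-b = 0 by omega]
        rfl
      rw [if_pos hb1, hfc, hBT0, List.append_nil, chg_replicate]
    · obtain ⟨kT, hBTeq⟩ : ∃ kT, BT = true :: List.replicate kT true := by
        have hrep := List.eq_replicate_of_mem hBT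
        have hne : BT ≠ [] := by
          apply List.ne_nil_of_mem (a := orient a b (b+1) 0)
          apply List.mem_flatMap.2
          refine ⟨b+1, by rw [List.mem_range'_1]; omega, List.mem_map.2 ⟨0, by simp [stops], rfl⟩⟩
        cases hl : BT.length with
        | zero => exact absurd (List.length_eq_zero_iff.1 hl) hne
        | succ k =>
          have hh : BT = List.replicate (k+1) true := by rw [← hl]; exact hrep
          exact ⟨k, by rw [hh]; rfl⟩
      rw [if_neg hb1, hfc, hBTeq, chg_replicate_append _ _ _ (by omega)]
      rw [chg_cons_cons]
      rw [show true :: List.replicate kT true = List.replicate (kT+1) true from rfl, chg_replicate]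
      simp
  rw [stepD]


lemma permN_head (n i : ℕ) : permN n i 0 = i :: others n i := by simp [permN]

lemma permN_mem_lt {n i p : ℕ} (hi : i < n) : ∀ z ∈ permN n i p, z < n := by
  intro z hz
  have hzo : z = i ∨ z ∈ others n i := by
    rw [permN] at hz
    rcases List.mem_append.1 hz with h | h
    · exact Or.inr (List.mem_of_mem_take h)
    · rcases List.mem_cons.1 h with h | h
      · exact Or.inl h
      · exact Or.inr (List.mem_of_mem_drop h)
  rcases hzo with rfl | h
  · exact hi
  · rw [others] at h
    rcases List.mem_append.1 h with h | h <;> (rw [List.mem_range'_1] at h; omega)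

lemma count_map_inj {α : Type*} [DecidableEq α] (f : ℕ → α) (n j : ℕ) (hj : j < n)
    (hfi : ∀ u v, u < n → v < n → f u = f v → u = v) :
    ∀ u : List ℕ, (∀ z ∈ u, z < n) → (u.map f).count (f j) = u.count j := by
  intro u
  induction u with
  | nil => simp
  | cons z t ih =>
    intro hall
    simp only [List.map_cons, List.count_cons]
    rw [ih (fun w hw => hall w (by simp [hw]))]
    congr 1
    simp only [beq_iff_eq]
    by_cases h : z = j
    · rw [if_pos (by rw [h]), if_pos h]
    · rw [if_neg (fun hh => h (hfi z j (hall z (by simp)) hj hh)), if_neg h]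

lemma IJ_length_le {n : ℕ} (ad : ℕ → ℕ → Bool) (hn : 2 ≤ n) :
    (IJ n ad).length ≤ n^2 + 2 - n := by
  have hflat : (IJ n ad).length = ((List.range n).map (fun i => (stops n ad i).length)).sum := by
    rw [IJ, List.length_flatMap]
    congr 1
    apply List.map_congr_left
    intro i _
    simp [Function.comp]
  have key : ∀ m : ℕ, m ≤ n → 2 * ((List.range m).map (fun i => n - i + 1)).sum + m * m
      = 2 * m * (n+1) + m := by
    intro m
    induction m with
    | zero => intro _; simp
    | succ k ih =>
      intro hm
      have ihk := ih (by omega)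
      rw [List.range_succ, List.map_append, List.sum_append]
      simp only [List.map_cons, List.map_nil, List.sum_cons, List.sum_nil]
      zify [show k ≤ n by omega] at ihk ⊢
      linear_combination ihk
  have hsum : ((List.range n).map (fun i => (stops n ad i).length)).sum
      ≤ ((List.range (n-1)).map (fun i => n - i + 1)).sum + 1 := by
    have hrs : List.range n = List.range (n-1) ++ [n-1] := by
      conv_lhs => rw [show n = (n-1)+1 by omega]
      rw [List.range_succ]
    rw [hrs, List.map_append, List.sum_append]
    simp only [List.map_cons, List.map_nil, List.sum_cons, List.sum_nil]
    have hlast : (stops n ad ((n:ℕ)-1)).length = 1 := by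
      rw [stops_last (by omega)]
      rfl
    have hbnd := List.sum_le_sum (l := List.range (n-1))
      (f := fun i => (stops n ad i).length) (g := fun i => n - i + 1)
      (fun i hi => stops_length (by have := List.mem_range.1 hi; omega))
    omega
  have hk := key (n-1) (by omega)
  have h1 : (IJ n ad).length ≤ ((List.range (n-1)).map (fun i => n - i + 1)).sum + 1 := by
    rw [hflat]; exact hsum
  have h23 : (0:ℤ) ≤ ((n:ℤ)-2) * ((n:ℤ)-3) := by
    rcases le_or_gt (n:ℤ) 2 with h | h
    · have h2 : (n:ℤ) = 2 := le_antisymm h (by exact_mod_cast hn)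
      rw [h2]
      norm_num
    · exact mul_nonneg (by linarith) (by linarith)
  have hZ : ((IJ n ad).length : ℤ) + n ≤ (n:ℤ)*n + 2 := by
    zify [show 1 ≤ n by omega] at hk h1
    nlinarith [hk, h1, h23]
  have hNat : (IJ n ad).length + n ≤ n*n + 2 := by exact_mod_cast hZ
  have hsq : n^2 = n*n := sq n
  omega

end K11

open K11 in
/-- every graph `G` on `n ≥ 2` vertices has a 2-11-representant that is a
concatenation of at most `n² - n + 2` permutations of the vertex set, such that every
vertex is the first letter of one of the permutations. In particular, every graph is
permutationally 2-11-representable. -/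
theorem all_graphs_perm_two_eleven {V : Type*} [DecidableEq V] [Fintype V]
    (G : SimpleGraph V) (hn : 2 ≤ Fintype.card V) :
    ∃ ps : List (List V), ps ≠ [] ∧
      (∀ p ∈ ps, ∀ v : V, p.count v = 1) ∧
      ps.length ≤ Fintype.card V ^ 2 + 2 - Fintype.card V ∧
      (∀ i : V, ∃ p ∈ ps, p.head? = some i) ∧
      IsK11Rep G 2 ps.flatten := by
  classical
  set n := Fintype.card V with hncard
  have hn0 : 0 < n := by omega
  set e := Fintype.equivFin V with he
  set f : ℕ → V := fun j => e.symm ⟨j % n, Nat.mod_lt _ hn0⟩ with hf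
  have hfj : ∀ j, (hj : j < n) → f j = e.symm ⟨j, hncard ▸ hj⟩ := by
    intro j hj
    simp only [hf]
    congr 1
    exact Fin.mk.injEq _ _ _ _ ▸ (by simp [Nat.mod_eq_of_lt hj])
  have hfe : ∀ v : V, f ((e v : Fin n) : ℕ) = v := by
    intro v
    rw [hfj _ (e v).isLt]
    simp
  have hfinj : ∀ u v, u < n → v < n → f u = f v → u = v := by
    intro u v hu hv h
    rw [hfj u hu, hfj v hv] at h
    have h2 := e.symm.injective h
    simpa using congrArg Fin.val h2
  set ad : ℕ → ℕ → Bool := fun i j => decide (G.Adj (f i) (f j)) with had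
  have hIJmem : ∀ i, i < n → ((i, 0) ∈ IJ n ad) := fun i hi =>
    List.mem_flatMap.2 ⟨i, List.mem_range.2 hi, List.mem_map.2 ⟨0, by simp [stops], rfl⟩⟩
  have hIJbound : ∀ ij ∈ IJ n ad, ij.1 < n ∧ ij.2 ≤ n - 1 - ij.1 := by
    intro ij hij
    rcases List.mem_flatMap.1 hij with ⟨i, hi, hmem⟩
    rcases List.mem_map.1 hmem with ⟨p, hp, rfl⟩
    exact ⟨List.mem_range.1 hi, mem_stops_le hp⟩
  refine ⟨((IJ n ad).map (fun ij => permN n ij.1 ij.2)).map (List.map f), ?_, ?_, ?_, ?_, ?_⟩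
  · intro hcon
    have h0 := hIJmem 0 (by omega)
    rw [List.map_eq_nil_iff, List.map_eq_nil_iff] at hcon
    rw [hcon] at h0
    exact absurd h0 List.not_mem_nil
  · intro p hp v
    rcases List.mem_map.1 hp with ⟨q, hq, rfl⟩
    rcases List.mem_map.1 hq with ⟨ij, hij, rfl⟩
    obtain ⟨hi, hpb⟩ := hIJbound ij hij
    conv_lhs => rw [show v = f ((e v : Fin n) : ℕ) from (hfe v).symm]
    rw [count_map_inj f n _ (e v).isLt hfinj _ (permN_mem_lt hi)]
    exact count_permN hi (e v).isLt
  · rw [List.length_map, List.length_map]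
    exact IJ_length_le ad hn
  · intro v
    refine ⟨List.map f (permN n ((e v : Fin n) : ℕ) 0),
      List.mem_map.2 ⟨permN n ((e v : Fin n) : ℕ) 0,
        List.mem_map.2 ⟨(((e v : Fin n) : ℕ), 0), hIJmem _ (e v).isLt, rfl⟩, rfl⟩, ?_⟩
    rw [permN_head, List.map_cons, List.head?_cons, hfe]
  · constructor
    · intro v
      apply List.mem_flatten.2
      refine ⟨List.map f (permN n ((e v : Fin n) : ℕ) 0),
        List.mem_map.2 ⟨permN n ((e v : Fin n) : ℕ) 0,
          List.mem_map.2 ⟨(((e v : Fin n) : ℕ), 0), hIJmem _ (e v).isLt, rfl⟩, rfl⟩, ?_⟩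
      rw [permN_head, List.map_cons]
      rw [hfe]
      exact List.mem_cons_self
    · have main : ∀ a b : ℕ, a < b → b < n →
          (G.Adj (f a) (f b) ↔ pattern11Count
            (((((IJ n ad).map (fun ij => permN n ij.1 ij.2)).map (List.map f)).flatten).filter
              (fun z => decide (z = f a ∨ z = f b))) ≤ 2) := by
        intro a b hab hbn
        have hps : (((IJ n ad).map (fun ij => permN n ij.1 ij.2)).map (List.map f)).flatten
            = List.map f (((IJ n ad).map (fun ij => permN n ij.1 ij.2)).flatten) := by
          rw [List.map_flatten]
        set wN := ((IJ n ad).map (fun ij => permN n ij.1 ij.2)).flatten with hwN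
        have hwNlt : ∀ z ∈ wN, z < n := by
          intro z hz
          rcases List.mem_flatten.1 hz with ⟨l, hl, hzl⟩
          rcases List.mem_map.1 hl with ⟨ij, hij, rfl⟩
          exact permN_mem_lt (hIJbound ij hij).1 z hzl
        rw [hps, List.filter_map]
        have hfiltc : List.filter ((fun z => decide (z = f a ∨ z = f b)) ∘ f) wN
            = List.filter (fun z => decide (z = a ∨ z = b)) wN := by
          apply List.filter_congr
          intro z hz
          simp only [Function.comp, decide_eq_decide]
          constructor
          · rintro (h | h)
            · exact Or.inl (hfinj z a (hwNlt z hz) (by omega) h)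
            · exact Or.inr (hfinj z b (hwNlt z hz) (by omega) h)
          · rintro (rfl | rfl) <;> simp
        rw [hfiltc]
        rw [p11_map f _ (fun u hu v hv h => hfinj u v
          (hwNlt u (List.mem_of_mem_filter hu)) (hwNlt v (List.mem_of_mem_filter hv)) h)]
        rw [hwN, List.filter_flatten, List.map_map]
        have hblocks : List.map ((List.filter (fun z => decide (z = a ∨ z = b)))
              ∘ (fun ij => permN n ij.1 ij.2)) (IJ n ad)
            = List.map ((blk a b) ∘ (fun ij => orient a b ij.1 ij.2)) (IJ n ad) := by
          apply List.map_congr_left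
          intro ij hij
          obtain ⟨hi, hp⟩ := hIJbound ij hij
          have hfp := filter_permN (a := a) (b := b) hab hbn hi hp
          simpa [Function.comp, blk] using hfp
        rw [hblocks]
        rw [show List.map ((blk a b) ∘ (fun ij => orient a b ij.1 ij.2)) (IJ n ad)
            = ((IJ n ad).map (fun ij => orient a b ij.1 ij.2)).map (blk a b) from
          List.map_map.symm]
        rw [p11_blocks (show a ≠ b by omega), chg_IJ hab hbn]
        have hadab : ad a b = decide (G.Adj (f a) (f b)) := rfl
        constructor
        · intro h
          rw [hadab, decide_eq_true h, if_pos rfl]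
          split_ifs <;> omega
        · intro h
          by_contra hAdj
          rw [hadab, decide_eq_false hAdj, if_neg (by simp)] at h
          split_ifs at h <;> omega
      intro x y hxy
      have hax : ((e x : Fin n) : ℕ) < n := (e x).isLt
      have hay : ((e y : Fin n) : ℕ) < n := (e y).isLt
      have hne : ((e x : Fin n) : ℕ) ≠ ((e y : Fin n) : ℕ) := by
        intro hc
        exact hxy (by
          have : (e x) = (e y) := Fin.val_injective hc
          exact e.injective this)
      rcases Nat.lt_or_ge ((e x : Fin n) : ℕ) ((e y : Fin n) : ℕ) with h | h
      · have hm := main _ _ h hay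
        rw [hfe, hfe] at hm
        exact hm
      · have hlt : ((e y : Fin n) : ℕ) < ((e x : Fin n) : ℕ) := by omega
        have hm := main _ _ hlt hax
        rw [hfe, hfe] at hm
        have hpred : (fun z : V => decide (z = x ∨ z = y)) = (fun z => decide (z = y ∨ z = x)) := by
          funext z
          exact decide_eq_decide.mpr or_comm
        rw [hpred, G.adj_comm]
        exact hm
end

section
/- For every integer r ≥ 2, a simple graph is r-uniformly (2r − 3)-11-representable if and only if it is an interval graph. -/
/-- `G` is an interval graph: each vertex gets a nonempty closed real interval such that
distinct vertices are adjacent iff their intervals intersect. -/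
def IsIntervalGraph {V : Type*} (G : SimpleGraph V) : Prop :=
  ∃ I : V → Set ℝ,
    (∀ v : V, ∃ a b : ℝ, a ≤ b ∧ I v = Set.Icc a b) ∧
    ∀ u v : V, u ≠ v → (G.Adj u v ↔ (I u ∩ I v).Nonempty)

namespace K11Aux
variable {V : Type*} [DecidableEq V]

/-- number of "changes" (consecutive unequal pairs) -/
def chCount (u : List V) : ℕ := (u.zip u.tail).countP (fun p => !decide (p.1 = p.2))

lemma pc_add_ch (u : List V) : pattern11Count u + chCount u = u.length - 1 := by
  have hlen : (u.zip u.tail).length = u.length - 1 := by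
    rw [List.length_zip, List.length_tail]; omega
  rw [← hlen]
  unfold pattern11Count chCount
  rw [eq_comm, List.length_eq_countP_add_countP (fun p : V × V => decide (p.1 = p.2))]
  congr 1
  apply List.countP_congr
  intro p _
  simp

lemma pc_cons_cons (a b : V) (l : List V) :
    pattern11Count (a :: b :: l) = (if a = b then 1 else 0) + pattern11Count (b :: l) := by
  unfold pattern11Count
  have h1 : (a :: b :: l).zip (a :: b :: l).tail = (a, b) :: ((b :: l).zip ((b :: l).tail)) := by
    simp [List.zip_cons_cons]
  rw [h1, List.countP_cons]
  simp only [decide_eq_true_eq]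
  omega

lemma ch_cons_cons (a b : V) (l : List V) :
    chCount (a :: b :: l) = (if a = b then 0 else 1) + chCount (b :: l) := by
  unfold chCount
  have h1 : (a :: b :: l).zip (a :: b :: l).tail = (a, b) :: ((b :: l).zip ((b :: l).tail)) := by
    simp [List.zip_cons_cons]
  rw [h1, List.countP_cons]
  by_cases h : a = b <;> simp [h] <;> omega

lemma ch_eq_zero : ∀ (l : List V) (a : V), chCount (a :: l) = 0 →
    a :: l = List.replicate (l.length + 1) a := by
  intro l
  induction l with
  | nil => intro a _; rfl
  | cons b t ih =>
    intro a h
    rw [ch_cons_cons] at h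
    by_cases hab : a = b
    · subst hab
      simp only [if_pos rfl, zero_add] at h
      simp only [eq_self_iff_true, if_true, zero_add] at h
      have := ih a h
      rw [List.replicate_succ]
      rw [this]
      simp [List.replicate_succ]
    · simp [hab] at h

lemma pc_replicate (x : V) : ∀ n, pattern11Count (List.replicate (n + 1) x) = n := by
  intro n
  induction n with
  | zero => rfl
  | succ m ih =>
    have : List.replicate (m + 2) x = x :: x :: List.replicate m x := by
      simp [List.replicate_succ]
    have h2 : List.replicate (m + 1) x = x :: List.replicate m x := by
      simp [List.replicate_succ]
    rw [this, pc_cons_cons, if_pos rfl, ← h2, ih]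
    omega

lemma pc_blocks {x y : V} (hxy : x ≠ y) : ∀ m n,
    pattern11Count (List.replicate (m + 1) x ++ List.replicate (n + 1) y) = m + n := by
  intro m
  induction m with
  | zero =>
    intro n
    have : List.replicate 1 x ++ List.replicate (n + 1) y
        = x :: y :: List.replicate n y := by simp [List.replicate_succ]
    rw [this, pc_cons_cons, if_neg hxy]
    have h2 : (y :: List.replicate n y) = List.replicate (n+1) y := by
      simp [List.replicate_succ]
    rw [h2, pc_replicate]
  | succ m ih =>
    intro n
    have : List.replicate (m + 2) x ++ List.replicate (n + 1) y
        = x :: x :: (List.replicate m x ++ List.replicate (n + 1) y) := by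
      simp [List.replicate_succ]
    have h2 : (x :: (List.replicate m x ++ List.replicate (n + 1) y))
        = List.replicate (m+1) x ++ List.replicate (n+1) y := by
      simp [List.replicate_succ]
    rw [this, pc_cons_cons, if_pos rfl, h2, ih]
    omega

lemma len_two {x y : V} (hxy : x ≠ y) : ∀ u : List V, (∀ a ∈ u, a = x ∨ a = y) →
    u.length = u.count x + u.count y := by
  intro u
  induction u with
  | nil => simp
  | cons a t ih =>
    intro h
    have ha := h a (by simp)
    have ht := ih (fun b hb => h b (by simp [hb]))
    rcases ha with ha | ha <;> subst ha <;>
      simp [List.count_cons, ht, hxy, Ne.symm hxy] <;> omega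

lemma two_block {x y : V} (hxy : x ≠ y) : ∀ u : List V, (∀ a ∈ u, a = x ∨ a = y) →
    x ∈ u → y ∈ u → chCount u ≤ 1 →
    u = List.replicate (u.count x) x ++ List.replicate (u.count y) y ∨
    u = List.replicate (u.count y) y ++ List.replicate (u.count x) x := by
  intro u
  induction u with
  | nil => simp
  | cons a t ih =>
    intro hmem hx hy hch
    rcases t with _ | ⟨b, t'⟩
    · simp at hx hy
      exact absurd (hx.trans hy.symm) hxy
    · rw [ch_cons_cons] at hch
      by_cases hab : a = b
      · subst hab
        simp only [if_pos rfl, zero_add] at hch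
        simp only [eq_self_iff_true, if_true, zero_add] at hch
        have hmemt : ∀ c ∈ a :: t', c = x ∨ c = y := fun c hc =>
          hmem c (by simp [List.mem_cons] at hc ⊢; tauto)
        have hxt : x ∈ a :: t' := by
          rcases List.mem_cons.mp hx with h | h
          · subst h; exact List.mem_cons_self
          · exact h
        have hyt : y ∈ a :: t' := by
          rcases List.mem_cons.mp hy with h | h
          · subst h; exact List.mem_cons_self
          · exact h
        rcases ih hmemt hxt hyt hch with ht | ht
        · rcases hmem a (by simp) with ha | ha
          · subst ha
            left
            have cx : (a :: a :: t').count a = (a :: t').count a + 1 := by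
              simp [List.count_cons]
            have cy : (a :: a :: t').count y = (a :: t').count y := by
              simp [List.count_cons, hxy]
            rw [cx, cy, List.replicate_succ, List.cons_append, ← ht]
          · subst ha
            exfalso
            have hcx : 0 < (a :: t').count x := List.count_pos_iff.mpr hxt
            rcases hn : (a :: t').count x with _ | k
            · omega
            · rw [hn, List.replicate_succ, List.cons_append] at ht
              exact hxy ((List.cons.inj ht).1).symm
        · rcases hmem a (by simp) with ha | ha
          · subst ha
            exfalso
            have hcy : 0 < (a :: t').count y := List.count_pos_iff.mpr hyt
            rcases hn : (a :: t').count y with _ | k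
            · omega
            · rw [hn, List.replicate_succ, List.cons_append] at ht
              exact hxy (List.cons.inj ht).1
          · subst ha
            right
            have cy : (a :: a :: t').count a = (a :: t').count a + 1 := by
              simp [List.count_cons]
            have cx : (a :: a :: t').count x = (a :: t').count x := by
              simp [List.count_cons, Ne.symm hxy]
            rw [cx, cy, List.replicate_succ, List.cons_append, ← ht]
      · rw [if_neg hab] at hch
        have hch0 : chCount (b :: t') = 0 := by omega
        have hconst := ch_eq_zero t' b hch0
        rcases hmem a (by simp) with ha | ha <;> rcases hmem b (by simp) with hb | hb
        · exact absurd (ha.trans hb.symm) hab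
        · -- a = x, b = y
          subst ha; subst hb
          left
          rw [show (a :: b :: t') = a :: (b :: t') from rfl, hconst]
          simp [List.count_cons, List.count_replicate, hab, Ne.symm hab,
            List.replicate_succ]
        · -- a = y, b = x
          subst ha; subst hb
          right
          rw [show (a :: b :: t') = a :: (b :: t') from rfl, hconst]
          simp [List.count_cons, List.count_replicate, hab, Ne.symm hab,
            List.replicate_succ]
        · exact absurd (ha.trans hb.symm) hab

/-- all occurrences of `x` come before all occurrences of `y` in `w` -/
def AllBefore (x y : V) (w : List V) : Prop :=
  ∀ l1 l2 : List V, w = l1 ++ l2 → y ∈ l1 → x ∉ l2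

lemma filter_of_allBefore {x y : V} (hxy : x ≠ y) : ∀ w : List V, AllBefore x y w →
    w.filter (fun a => decide (a = x ∨ a = y)) =
      List.replicate (w.count x) x ++ List.replicate (w.count y) y := by
  intro w
  induction w with
  | nil => simp
  | cons a t ih =>
    intro hP
    have hP' : AllBefore x y t := by
      intro l1 l2 h hyl
      exact hP (a :: l1) l2 (by rw [h, List.cons_append]) (List.mem_cons_of_mem _ hyl)
    by_cases hax : a = x
    · subst hax
      rw [List.filter_cons_of_pos (by simp), ih hP']
      have cx : (a :: t).count a = t.count a + 1 := by simp [List.count_cons]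
      have cy : (a :: t).count y = t.count y := by simp [List.count_cons, hxy]
      rw [cx, cy, List.replicate_succ, List.cons_append]
    · by_cases hay : a = y
      · subst hay
        have hxt : x ∉ t := hP [a] t rfl (by simp)
        have hxt0 : t.count x = 0 := List.count_eq_zero.mpr hxt
        rw [List.filter_cons_of_pos (by simp), ih hP']
        have cx : (a :: t).count x = 0 := by
          simp [List.count_cons, hxt0, hax]
        have cy : (a :: t).count a = t.count a + 1 := by simp [List.count_cons]
        rw [cx, cy, hxt0]
        simp [List.replicate_succ]
      · rw [List.filter_cons_of_neg (by simp [hax, hay]), ih hP']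
        have cx : (a :: t).count x = t.count x := by simp [List.count_cons, hax]
        have cy : (a :: t).count y = t.count y := by simp [List.count_cons, hay]
        rw [cx, cy]

lemma allBefore_of_filter {x y : V} (hxy : x ≠ y) {w : List V} {m n : ℕ}
    (h : w.filter (fun a => decide (a = x ∨ a = y)) =
      List.replicate m x ++ List.replicate n y) : AllBefore x y w := by
  intro l1 l2 hw hy hx
  rw [hw, List.filter_append] at h
  have hy' : y ∈ l1.filter (fun a => decide (a = x ∨ a = y)) :=
    List.mem_filter.mpr ⟨hy, by simp⟩
  have hx' : x ∈ l2.filter (fun a => decide (a = x ∨ a = y)) :=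
    List.mem_filter.mpr ⟨hx, by simp⟩
  rcases List.append_eq_append_iff.mp h with ⟨c, h1, h2⟩ | ⟨c, h1, h2⟩
  · have : y ∈ List.replicate m x := by
      rw [h1]; exact List.mem_append_left _ hy'
    exact hxy (List.eq_of_mem_replicate this).symm
  · have : x ∈ List.replicate n y := by
      rw [h2]; exact List.mem_append_right _ hx'
    exact hxy (List.eq_of_mem_replicate this)

lemma allBefore_iff_forall {x y : V} (hxy : x ≠ y) (w : List V) :
    AllBefore x y w ↔
    ∀ i j : ℕ, w[i]? = some x → w[j]? = some y → i < j := by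
  constructor
  · intro hP i j hi hj
    obtain ⟨hilt, hiv⟩ := List.getElem?_eq_some_iff.mp hi
    obtain ⟨hjlt, hjv⟩ := List.getElem?_eq_some_iff.mp hj
    have hsplit : w = w.take (j+1) ++ w.drop (j+1) := (List.take_append_drop _ _).symm
    have hylt : y ∈ w.take (j+1) := by
      have hjl : j < (w.take (j+1)).length := by
        rw [List.length_take]; omega
      have : (w.take (j+1))[j] = y := by rw [List.getElem_take]; exact hjv
      exact this ▸ List.getElem_mem hjl
    have hxnd := hP _ _ hsplit hylt
    by_contra hij
    push_neg at hij
    have hine : i ≠ j := fun hh => hxy (by rw [← hiv, ← hjv]; congr)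
    have higt : j + 1 ≤ i := by omega
    have hilt2 : i - (j+1) < (w.drop (j+1)).length := by
      rw [List.length_drop]; omega
    have : (w.drop (j+1))[i - (j+1)] = x := by
      rw [List.getElem_drop]
      have : j + 1 + (i - (j+1)) = i := by omega
      simp_rw [this]; exact hiv
    exact hxnd (this ▸ List.getElem_mem hilt2)
  · intro hF l1 l2 hw hy hx
    obtain ⟨j, hjlt, hjv⟩ := List.getElem_of_mem hy
    obtain ⟨k, hklt, hkv⟩ := List.getElem_of_mem hx
    have h1 : w[j]? = some y := by
      rw [hw]
      refine List.getElem?_eq_some_iff.mpr ⟨by rw [List.length_append]; omega, ?_⟩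
      rw [List.getElem_append_left hjlt]; exact hjv
    have h2 : w[l1.length + k]? = some x := by
      rw [hw]
      refine List.getElem?_eq_some_iff.mpr ⟨by rw [List.length_append]; omega, ?_⟩
      rw [List.getElem_append_right (by omega)]
      simpa using hkv
    have := hF _ _ h2 h1
    omega

/-- The central combinatorial equivalence: in a word where `x` and `y` each occur `r ≥ 2`
times, the induced `{x,y}`-subword has at most `2r-3` occurrences of 11 iff it is not
the case that all occurrences of one letter precede all occurrences of the other. -/
lemma key_iff {r : ℕ} (hr : 2 ≤ r) {x y : V} (hxy : x ≠ y) {w : List V}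
    (hcx : w.count x = r) (hcy : w.count y = r) :
    pattern11Count (w.filter (fun a => decide (a = x ∨ a = y))) ≤ 2 * r - 3 ↔
      ¬ (AllBefore x y w ∨ AllBefore y x w) := by
  set u := w.filter (fun a => decide (a = x ∨ a = y)) with hu
  have hqp : w.filter (fun a => decide (a = y ∨ a = x)) = u := by
    rw [hu]; exact List.filter_congr (fun a _ => by simp [or_comm])
  have hcux : u.count x = r := by rw [hu, List.count_filter (by simp)]; exact hcx
  have hcuy : u.count y = r := by rw [hu, List.count_filter (by simp)]; exact hcy
  have hmem : ∀ a ∈ u, a = x ∨ a = y := fun a ha => by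
    have := (List.mem_filter.mp (hu ▸ ha)).2
    simpa using this
  have hlen : u.length = 2 * r := by
    rw [len_two hxy u hmem, hcux, hcuy]; omega
  have hxu : x ∈ u := List.count_pos_iff.mp (by omega)
  have hyu : y ∈ u := List.count_pos_iff.mp (by omega)
  have hblocks : pattern11Count
      (List.replicate r x ++ List.replicate r y) = 2 * r - 2 := by
    obtain ⟨r', rfl⟩ : ∃ r', r = r' + 1 := ⟨r - 1, by omega⟩
    rw [pc_blocks hxy r' r']; omega
  have hblocks' : pattern11Count
      (List.replicate r y ++ List.replicate r x) = 2 * r - 2 := by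
    obtain ⟨r', rfl⟩ : ∃ r', r = r' + 1 := ⟨r - 1, by omega⟩
    rw [pc_blocks (Ne.symm hxy) r' r']; omega
  constructor
  · intro hle hor
    rcases hor with hP | hP
    · have h := filter_of_allBefore hxy w hP
      rw [hcx, hcy, ← hu] at h
      rw [h, hblocks] at hle
      omega
    · have h := filter_of_allBefore (Ne.symm hxy) w hP
      rw [hcy, hcx, hqp] at h
      rw [h, hblocks'] at hle
      omega
  · intro hnor
    by_contra hgt
    push_neg at hgt
    have hsum := pc_add_ch u
    rw [hlen] at hsum
    have hch : chCount u ≤ 1 := by omega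
    rcases two_block hxy u hmem hxu hyu hch with h | h
    · rw [hcux, hcuy] at h
      exact hnor (Or.inl (allBefore_of_filter hxy (hu ▸ h)))
    · rw [hcux, hcuy] at h
      refine hnor (Or.inr (allBefore_of_filter (Ne.symm hxy) (m := r) (n := r) ?_))
      rw [hqp]
      exact h

end K11Aux

lemma icc_inter_nonempty {a1 b1 a2 b2 : ℝ} (h1 : a1 ≤ b1) (h2 : a2 ≤ b2) :
    (Set.Icc a1 b1 ∩ Set.Icc a2 b2).Nonempty ↔ a1 ≤ b2 ∧ a2 ≤ b1 := by
  rw [Set.Icc_inter_Icc, Set.nonempty_Icc]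
  constructor
  · intro h
    rw [sup_le_iff, le_inf_iff, le_inf_iff] at h
    exact ⟨h.1.2, h.2.1⟩
  · intro h
    rw [sup_le_iff, le_inf_iff, le_inf_iff]
    exact ⟨⟨h1, h.1⟩, ⟨h.2, h2⟩⟩

lemma sorted_split {α : Type*} {le : α → α → Bool} {s : List α}
    (hs : List.Pairwise (fun a b => le a b = true) s) {u v : α}
    (hu : u ∈ s) (hv : v ∈ s) (hvu : le v u ≠ true) (hvv : le v v = true) :
    ∃ s1 s2, s = s1 ++ s2 ∧ u ∈ s1 ∧ v ∈ s2 := by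
  obtain ⟨t1, t2, rfl⟩ := List.append_of_mem hv
  rcases List.mem_append.mp hu with h | h
  · exact ⟨t1, v :: t2, rfl, h, List.mem_cons_self⟩
  · rcases List.mem_cons.mp h with h | h
    · subst h; exact absurd hvv hvu
    · exfalso
      have := (List.pairwise_append.mp hs).2.1
      have := (List.pairwise_cons.mp this).1 u h
      exact hvu this

lemma countP_flatMap_sum {α β : Type*} (f : α → List β) (p : β → Bool) :
    ∀ l : List α, (l.flatMap f).countP p = (l.map fun u => (f u).countP p).sum := by
  intro l
  induction l with
  | nil => simp
  | cons a t ih => simp [List.flatMap_cons, List.countP_append, ih]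

lemma sum_map_ite {α : Type*} [DecidableEq α] (r : ℕ) (v : α) :
    ∀ l : List α, l.Nodup → v ∈ l →
      (l.map fun u => if u = v then r else 0).sum = r := by
  intro l
  induction l with
  | nil => simp
  | cons a t ih =>
    intro hnd hv
    rcases List.mem_cons.mp hv with h | h
    · subst h
      have hvnt : v ∉ t := (List.nodup_cons.mp hnd).1
      have : (t.map fun u => if u = v then r else 0).sum = 0 :=
        List.sum_eq_zero (by
          intro z hz
          obtain ⟨u, hu, rfl⟩ := List.mem_map.mp hz
          simp only [ite_eq_right_iff]
          intro h; exact absurd (h ▸ hu) hvnt)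
      simp [this]
    · have hna : a ≠ v := fun hh => (List.nodup_cons.mp hnd).1 (hh ▸ h)
      simp [hna, ih (List.nodup_cons.mp hnd).2 h]


theorem fwd {V : Type*} [DecidableEq V] [Fintype V]
    (r : ℕ) (hr : 2 ≤ r) (G : SimpleGraph V)
    (h : UniformK11Rep G r (2 * r - 3)) : IsIntervalGraph G := by
  obtain ⟨w, ⟨hall, hadj⟩, hcnt⟩ := h
  set P : V → Finset ℕ := fun v => (Finset.range w.length).filter (fun i => w[i]? = some v)
    with hP
  have hmemP : ∀ v i, i ∈ P v ↔ w[i]? = some v := by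
    intro v i
    rw [hP]
    simp only [Finset.mem_filter, Finset.mem_range, and_iff_right_iff_imp]
    intro hi
    exact (List.getElem?_eq_some_iff.mp hi).1
  have hne : ∀ v : V, (P v).Nonempty := by
    intro v
    obtain ⟨i, hi⟩ := List.mem_iff_getElem?.mp (hall v)
    exact ⟨i, (hmemP v i).mpr hi⟩
  refine ⟨fun v => Set.Icc ((P v).min' (hne v) : ℝ) ((P v).max' (hne v) : ℝ), ?_, ?_⟩
  · intro v
    exact ⟨_, _, Nat.cast_le.mpr (Finset.min'_le _ _ (Finset.max'_mem _ _)), rfl⟩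
  · intro x y hxy
    rw [hadj x y hxy, K11Aux.key_iff hr hxy (hcnt x) (hcnt y)]
    have hPiff : ∀ x y : V, x ≠ y → (K11Aux.AllBefore x y w ↔
        (P x).max' (hne x) < (P y).min' (hne y)) := by
      intro x y hxy
      rw [K11Aux.allBefore_iff_forall hxy, Finset.max'_lt_iff]
      constructor
      · intro h i hi
        rw [Finset.lt_min'_iff]
        intro j hj
        exact h i j ((hmemP x i).mp hi) ((hmemP y j).mp hj)
      · intro h i j hi hj
        exact (Finset.lt_min'_iff _ _).mp (h i ((hmemP x i).mpr hi)) j ((hmemP y j).mpr hj)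
    rw [hPiff x y hxy, hPiff y x (Ne.symm hxy),
      icc_inter_nonempty (Nat.cast_le.mpr (Finset.min'_le _ _ (Finset.max'_mem _ _)))
        (Nat.cast_le.mpr (Finset.min'_le _ _ (Finset.max'_mem _ _)))]
    rw [show ((((P x).min' (hne x) : ℕ) : ℝ) ≤ (((P y).max' (hne y) : ℕ) : ℝ) ∧
        (((P y).min' (hne y) : ℕ) : ℝ) ≤ (((P x).max' (hne x) : ℕ) : ℝ)) ↔
        ((P x).min' (hne x) ≤ (P y).max' (hne y) ∧
         (P y).min' (hne y) ≤ (P x).max' (hne x)) by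
      constructor <;> intro hh <;> exact ⟨by exact_mod_cast hh.1, by exact_mod_cast hh.2⟩]
    omega

theorem bwd {V : Type*} [DecidableEq V] [Fintype V]
    (r : ℕ) (hr : 2 ≤ r) (G : SimpleGraph V)
    (h : IsIntervalGraph G) : UniformK11Rep G r (2 * r - 3) := by
  classical
  obtain ⟨I, hI, hadjI⟩ := h
  choose a b hab hIcc using hI
  set key : V × Bool → ℝ ×ₗ Bool := fun e => toLex (cond e.2 (b e.1) (a e.1), e.2) with hkey
  set le : V × Bool → V × Bool → Bool := fun e f => decide (key e ≤ key f) with hle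
  set events : List (V × Bool) :=
    Finset.univ.toList.flatMap fun v => List.replicate (r-1) (v, false) ++ [(v, true)]
    with hevents
  set s := events.mergeSort le with hs
  set w := s.map Prod.fst with hw
  have hperm : List.Perm s events := List.mergeSort_perm events le
  have hsorted : List.Pairwise (fun e f => le e f = true) s :=
    List.pairwise_mergeSort
      (fun e f g hef hfg => by
        simp only [hle, decide_eq_true_eq] at hef hfg ⊢
        exact le_trans hef hfg)
      (fun e f => by
        simp only [hle, Bool.or_eq_true, decide_eq_true_eq]
        exact le_total _ _)
      events
  -- counts
  have hcnt : ∀ v : V, w.count v = r := by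
    intro v
    rw [hw, List.count_eq_countP, List.countP_map, hperm.countP_eq, hevents,
      countP_flatMap_sum]
    have hmapeq : (Finset.univ.toList.map fun u =>
        ((List.replicate (r-1) (u, false) ++ [(u, true)]).countP
          ((fun x => x == v) ∘ Prod.fst))) =
        (Finset.univ.toList.map fun u => if u = v then r else 0) := by
      apply List.map_congr_left
      intro u _
      rw [List.countP_append, List.countP_replicate]
      by_cases huv : u = v <;> simp [huv, List.countP_cons] <;> omega
    rw [hmapeq, sum_map_ite r v _ (Finset.univ.nodup_toList) (by simp)]
  -- membership
  have hmemw : ∀ v : V, v ∈ w := by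
    intro v
    rw [hw]
    exact List.mem_map.mpr ⟨(v, true), hperm.mem_iff.mpr
      (List.mem_flatMap.mpr ⟨v, by simp, by simp⟩), rfl⟩
  -- AllBefore characterization
  have hABiff : ∀ x y : V, x ≠ y → (K11Aux.AllBefore x y w ↔ b x < a y) := by
    intro x y hxy
    constructor
    · intro hP
      by_contra hge
      push_neg at hge  -- a y ≤ b x
      have hkeylt : key (y, false) < key (x, true) := by
        rw [hkey]
        simp only [cond_false, cond_true]
        rw [Prod.Lex.lt_iff]
        rcases lt_or_eq_of_le hge with h' | h'
        · exact Or.inl h'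
        · exact Or.inr ⟨h', by simp⟩
      have hmemu : (y, false) ∈ s := hperm.mem_iff.mpr
        (List.mem_flatMap.mpr ⟨y, by simp, by
          apply List.mem_append_left
          apply List.mem_replicate.mpr
          exact ⟨by omega, rfl⟩⟩)
      have hmemv : (x, true) ∈ s := hperm.mem_iff.mpr
        (List.mem_flatMap.mpr ⟨x, by simp, by simp⟩)
      have hvu : le (x, true) (y, false) ≠ true := by
        simp only [hle, ne_eq, decide_eq_true_eq]
        exact not_le.mpr hkeylt
      have hvv : le (x, true) (x, true) = true := by
        simp [hle]
      obtain ⟨s1, s2, hsplit, hu, hv⟩ := sorted_split hsorted hmemu hmemv hvu hvv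
      refine hP (s1.map Prod.fst) (s2.map Prod.fst) ?_ ?_ ?_
      · rw [hw, hsplit, List.map_append]
      · exact List.mem_map.mpr ⟨(y, false), hu, rfl⟩
      · exact List.mem_map.mpr ⟨(x, true), hv, rfl⟩
    · intro hlt l1 l2 hwsplit hy hx
      have hms : s.map Prod.fst = l1 ++ l2 := by rw [← hw]; exact hwsplit
      obtain ⟨s1, s2, hs12, h1, h2⟩ := List.map_eq_append_iff.mp hms
      have hy1 : y ∈ s1.map Prod.fst := by rw [h1]; exact hy
      have hx2 : x ∈ s2.map Prod.fst := by rw [h2]; exact hx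
      obtain ⟨e1, he1, he1v⟩ := List.mem_map.mp hy1
      obtain ⟨e2, he2, he2v⟩ := List.mem_map.mp hx2
      have hrel : le e1 e2 = true :=
        (List.pairwise_append.mp (hs12 ▸ hsorted)).2.2 e1 he1 e2 he2
      rw [hle] at hrel
      simp only [decide_eq_true_eq] at hrel
      have hk1 : toLex (a y, false) ≤ key e1 := by
        rcases e1 with ⟨v1, b1⟩
        have hv1 : v1 = y := he1v
        rw [hv1, hkey]
        cases b1
        · simp
        · simp only [cond_true, cond_false]
          rw [Prod.Lex.le_iff]
          rcases lt_or_eq_of_le (hab y) with h' | h'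
          · exact Or.inl h'
          · exact Or.inr ⟨h', Bool.false_le _⟩
      have hk2 : key e2 ≤ toLex (b x, true) := by
        rcases e2 with ⟨v2, b2⟩
        have hv2 : v2 = x := he2v
        rw [hv2, hkey]
        cases b2
        · simp only [cond_true, cond_false]
          rw [Prod.Lex.le_iff]
          rcases lt_or_eq_of_le (hab x) with h' | h'
          · exact Or.inl h'
          · exact Or.inr ⟨h', Bool.false_le _⟩
        · simp
      have hfinal : toLex (a y, false) ≤ toLex (b x, true) :=
        le_trans hk1 (le_trans hrel hk2)
      rw [Prod.Lex.le_iff] at hfinal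
      rcases hfinal with h' | h'
      · exact absurd h' (by exact not_lt.mpr (le_of_lt hlt))
      · exact absurd h'.1 (by exact ne_of_gt hlt)
  -- assemble
  refine ⟨w, ⟨hmemw, ?_⟩, hcnt⟩
  intro x y hxy
  rw [hadjI x y hxy, hIcc x, hIcc y, icc_inter_nonempty (hab x) (hab y),
    K11Aux.key_iff hr hxy (hcnt x) (hcnt y), hABiff x y hxy, hABiff y x (Ne.symm hxy),
    not_or, not_lt, not_lt]
  exact ⟨fun hh => ⟨hh.2, hh.1⟩, fun hh => ⟨hh.2, hh.1⟩⟩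

/-- for every `r ≥ 2`, a graph is `r`-uniformly `(2r-3)`-11-representable
iff it is an interval graph. -/
theorem r_uniform_iff_intervalGraph {V : Type*} [DecidableEq V] [Fintype V]
    (r : ℕ) (hr : 2 ≤ r) (G : SimpleGraph V) :
    UniformK11Rep G r (2 * r - 3) ↔ IsIntervalGraph G := by
  exact ⟨fwd r hr G, bwd r hr G⟩
end
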